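/- Converting a source vertex into a sink (a 'click') in an acyclic orientation of a graph yields again an acyclic orientation, and the relation generated by clicks on Acyc(Y) is an equivalence relation. -/

import Mathlib

namespace AcycPaper

variable {V : Type*}

/-- `r` is an orientation of the graph `Y`: exactly one direction per edge. -/
def IsOrientation (Y : SimpleGraph V) (r : V → V → Prop) : Prop :=
  (∀ i j, Y.Adj i j ↔ (r i j ∨ r j i)) ∧ ∀ i j, r i j → ¬ r j i

/-- A relation is acyclic if it has no directed cycles. -/
def IsAcyclicRel (r : V → V → Prop) : Prop := ∀ v, ¬ Relation.TransGen r v v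

/-- The set of acyclic orientations of `Y`. -/
def Acyc (Y : SimpleGraph V) : Set (V → V → Prop) :=
  {r | IsOrientation Y r ∧ IsAcyclicRel r}

/-- `v` is a source: no edge points into `v`. -/
def IsSource (r : V → V → Prop) (v : V) : Prop := ∀ j, ¬ r j v

open Classical in
/-- Click (source-to-sink move) at `v`: reverse all edges incident to `v`. -/
def click (r : V → V → Prop) (v : V) : V → V → Prop :=
  fun i j => if v = i ∨ v = j then r j i else r i j

/-- One click step between acyclic orientations. -/
def ClickStep (Y : SimpleGraph V) (r r' : V → V → Prop) : Prop :=
  r ∈ Acyc Y ∧ ∃ v, IsSource r v ∧ r' = click r v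

/-- κ-equivalence: the equivalence relation generated by clicks. -/
def KEquiv (Y : SimpleGraph V) : (V → V → Prop) → (V → V → Prop) → Prop :=
  Relation.EqvGen (ClickStep Y)

/-- The set of κ-equivalence classes of acyclic orientations. -/
def KQuot (Y : SimpleGraph V) := Quot (fun a b : Acyc Y => ClickStep Y a.1 b.1)

/-- κ(Y): number of κ-equivalence classes. -/
noncomputable def kappa (Y : SimpleGraph V) : ℕ := Nat.card (KQuot Y)

/-- α(Y): number of acyclic orientations. -/
noncomputable def alpha (Y : SimpleGraph V) : ℕ := Nat.card (Acyc Y)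

section Aux

variable {Y : SimpleGraph V}

lemma not_self {r : V → V → Prop} (hr : r ∈ Acyc Y) (i : V) : ¬ r i i :=
  fun h => hr.2 i (Relation.TransGen.single h)

open Classical in
lemma click_of_left {r : V → V → Prop} {v i j : V} (h : v = i ∨ v = j) :
    click r v i j = r j i := if_pos h

open Classical in
lemma click_of_notin {r : V → V → Prop} {v i j : V} (h : ¬ (v = i ∨ v = j)) :
    click r v i j = r i j := if_neg h

/-- Lemma A: clicking a source preserves acyclic orientations. -/
lemma click_mem_acyc {r : V → V → Prop} (hr : r ∈ Acyc Y) {v : V}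
    (hv : IsSource r v) : click r v ∈ Acyc Y := by
  classical
  have hne : ∀ i j, click r v i j → i ≠ v := by
    intro i j hij hiv
    rw [click_of_left (Or.inl hiv.symm)] at hij
    exact hv j (hiv ▸ hij)
  have htrans : ∀ i j, click r v i j → j ≠ v → r i j := by
    intro i j hij hjv
    by_cases h : v = i ∨ v = j
    · rcases h with h | h
      · exact absurd h.symm (hne i j hij)
      · exact absurd h.symm hjv
    · rwa [click_of_notin h] at hij
  refine ⟨⟨fun i j => ?_, fun i j hij hji => ?_⟩, ?_⟩
  · by_cases h : v = i ∨ v = j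
    · rw [click_of_left h, click_of_left (Or.symm h)]
      rw [(hr.1.1 i j)]
      tauto
    · rw [click_of_notin h, click_of_notin (fun hh => h (Or.symm hh))]
      exact hr.1.1 i j
  · by_cases h : v = i ∨ v = j
    · rw [click_of_left h] at hij
      rw [click_of_left (Or.symm h)] at hji
      exact hr.1.2 j i hij hji
    · rw [click_of_notin h] at hij
      rw [click_of_notin (fun hh => h (Or.symm hh))] at hji
      exact hr.1.2 i j hij hji
  · -- acyclicity
    have key : ∀ a b, Relation.TransGen (click r v) a b → b ≠ v →
        Relation.TransGen r a b := by
      intro a b h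
      induction h with
      | single h1 => intro hb; exact Relation.TransGen.single (htrans _ _ h1 hb)
      | tail h1 h2 ih =>
        intro hc
        have hb : _ ≠ v := hne _ _ h2
        exact (ih hb).tail (htrans _ _ h2 hc)
    intro w hw
    by_cases hwv : w = v
    · subst hwv
      obtain ⟨b, hb, -⟩ := Relation.TransGen.head'_iff.1 hw
      exact hne _ _ hb rfl
    · exact hr.2 w (key w w hw hwv)

/-- A list is a valid click sequence from `s`. -/
def ValidSeq (Y : SimpleGraph V) : (V → V → Prop) → List V → Prop
  | _, [] => True
  | s, (a :: L) => IsSource s a ∧ ValidSeq Y (click s a) L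

lemma chain_of_validSeq : ∀ (L : List V) (s : V → V → Prop), s ∈ Acyc Y →
    ValidSeq Y s L → Relation.ReflTransGen (ClickStep Y) s (L.foldl click s) := by
  intro L
  induction L with
  | nil => intro s _ _; exact Relation.ReflTransGen.refl
  | cons a L ih =>
    intro s hs hv
    obtain ⟨h1, h2⟩ := hv
    have step : ClickStep Y s (click s a) := ⟨hs, a, h1, rfl⟩
    exact Relation.ReflTransGen.head step (ih (click s a) (click_mem_acyc hs h1) h2)

lemma validSeq_of : ∀ (L : List V) (s : V → V → Prop), s ∈ Acyc Y →
    L.Nodup → L.Pairwise (fun a b => ¬ s b a) →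
    (∀ a ∈ L, ∀ j, j ∉ L → ¬ s j a) → ValidSeq Y s L := by
  classical
  intro L
  induction L with
  | nil => intro s _ _ _ _; trivial
  | cons a L ih =>
    intro s hs hnd hp hcl
    have haL : a ∉ L := (List.nodup_cons.1 hnd).1
    have hpa : ∀ b ∈ L, ¬ s b a := (List.pairwise_cons.1 hp).1
    have hsrc : IsSource s a := by
      intro j
      by_cases hj : j ∈ a :: L
      · rcases List.mem_cons.1 hj with rfl | hj'
        · exact not_self hs _
        · exact hpa j hj'
      · exact hcl a (List.mem_cons_self) j hj
    refine ⟨hsrc, ih (click s a) (click_mem_acyc hs hsrc) (List.nodup_cons.1 hnd).2 ?_ ?_⟩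
    · refine ((List.pairwise_cons.1 hp).2).imp_of_mem ?_
      intro x y hx hy hxy
      have hax : a ≠ x := fun h => haL (h ▸ hx)
      have hay : a ≠ y := fun h => haL (h ▸ hy)
      rw [click_of_notin (by tauto)]
      exact hxy
    · intro b hb j hj
      have hab : a ≠ b := fun h => haL (h ▸ hb)
      by_cases hja : j = a
      · subst hja
        rw [click_of_left (Or.inl rfl)]
        exact hpa b hb
      · have hjL : j ∉ a :: L := by
          simp only [List.mem_cons, not_or]; exact ⟨hja, hj⟩
        rw [click_of_notin (by tauto)]
        exact hcl b (List.mem_cons_of_mem a hb) j hjL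

open Classical in
lemma foldl_click_diag : ∀ (L : List V) (s : V → V → Prop) (i : V),
    (L.foldl click s) i i = s i i := by
  intro L
  induction L with
  | nil => intro s i; rfl
  | cons a L ih =>
    intro s i
    rw [List.foldl_cons, ih]
    unfold click
    split <;> rfl

open Classical in
lemma foldl_click_apply : ∀ (L : List V) (s : V → V → Prop) (i j : V), i ≠ j →
    (L.foldl click s) i j =
      if Even (L.count i + L.count j) then s i j else s j i := by
  classical
  intro L
  induction L with
  | nil => intro s i j _; simp
  | cons a L ih =>
    intro s i j hij
    rw [List.foldl_cons, ih _ _ _ hij]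
    by_cases hai : a = i
    · subst hai
      have hcnt : (a :: L).count a + (a :: L).count j = (L.count a + L.count j) + 1 := by
        rw [List.count_cons_self, List.count_cons_of_ne hij]
        omega
      rw [hcnt]
      rw [click_of_left (Or.inl rfl), click_of_left (Or.inr rfl)]
      rcases Nat.even_or_odd (L.count a + L.count j) with he | ho
      · rw [if_pos he, if_neg (by simpa using Even.add_one he)]
      · rw [if_neg (by simpa using ho), if_pos (Odd.add_one ho)]
    · by_cases haj : a = j
      · subst haj
        have hcnt : (a :: L).count i + (a :: L).count a = (L.count i + L.count a) + 1 := by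
          rw [List.count_cons_self, List.count_cons_of_ne (fun h => hij h.symm)]
          omega
        rw [hcnt]
        rw [click_of_left (Or.inr rfl), click_of_left (Or.inl rfl)]
        rcases Nat.even_or_odd (L.count i + L.count a) with he | ho
        · rw [if_pos he, if_neg (by simpa using Even.add_one he)]
        · rw [if_neg (by simpa using ho), if_pos (Odd.add_one ho)]
      · have hcnt : (a :: L).count i + (a :: L).count j = L.count i + L.count j := by
          rw [List.count_cons_of_ne hai,
            List.count_cons_of_ne haj]
        rw [hcnt, click_of_notin (by tauto), click_of_notin (by tauto)]

/-- Any finite set of vertices admits a topological ordering w.r.t. an acyclic relation. -/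
lemma exists_topo [Fintype V] {r : V → V → Prop} (hr : r ∈ Acyc Y) :
    ∀ t : Finset V, ∃ L : List V, L.Nodup ∧ (∀ x, x ∈ L ↔ x ∈ t) ∧
      L.Pairwise (fun a b => ¬ r b a) := by
  classical
  intro t
  induction t using Finset.strongInductionOn with
  | _ t ih =>
    rcases t.eq_empty_or_nonempty with rfl | ht
    · exact ⟨[], by simp⟩
    · haveI : IsTrans V (Relation.TransGen r) := ⟨fun _ _ _ => Relation.TransGen.trans⟩
      haveI : IsIrrefl V (Relation.TransGen r) := ⟨hr.2⟩
      have hwf := Finite.wellFounded_of_trans_of_irrefl (Relation.TransGen r)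
      obtain ⟨m, hm, hmin⟩ := hwf.has_min (↑t : Set V) (by exact_mod_cast ht)
      obtain ⟨L, hnd, hmem, hp⟩ := ih (t.erase m) (Finset.erase_ssubset hm)
      refine ⟨m :: L, ?_, ?_, ?_⟩
      · refine List.nodup_cons.2 ⟨fun h => ?_, hnd⟩
        exact (Finset.notMem_erase m t) ((hmem m).1 h)
      · intro x
        simp only [List.mem_cons, hmem, Finset.mem_erase]
        constructor
        · rintro (rfl | ⟨-, hx⟩) <;> [exact hm; exact hx]
        · intro hx
          by_cases hxm : x = m
          · exact Or.inl hxm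
          · exact Or.inr ⟨hxm, hx⟩
      · refine List.pairwise_cons.2 ⟨?_, hp⟩
        intro b hb hbm
        exact hmin b (Finset.mem_erase.1 ((hmem b).1 hb)).2 (Relation.TransGen.single hbm)

/-- Core lemma for symmetry: a single click can be undone by further clicks. -/
lemma clickStep_rev [Fintype V] {r r' : V → V → Prop} (h : ClickStep Y r r') :
    Relation.ReflTransGen (ClickStep Y) r' r := by
  classical
  obtain ⟨hr, v, hv, rfl⟩ := h
  obtain ⟨L0, hnd0, hmem0, hp0⟩ := exists_topo hr Finset.univ
  have hall : ∀ x : V, x ∈ L0 := fun x => (hmem0 x).2 (Finset.mem_univ x)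
  set L1 := L0.erase v with hL1
  have hvL0 : v ∈ L0 := hall v
  have hnd1 : L1.Nodup := hnd0.erase v
  have hvL1 : v ∉ L1 := hnd0.not_mem_erase
  have hmem1 : ∀ x, x ∈ L1 ↔ x ≠ v := by
    intro x
    rw [hL1, hnd0.mem_erase_iff]
    exact ⟨fun h => h.1, fun h => ⟨h, hall x⟩⟩
  set L := v :: L1 with hL
  have hndL : L.Nodup := List.nodup_cons.2 ⟨hvL1, hnd1⟩
  have hmemL : ∀ x, x ∈ L := by
    intro x
    by_cases hx : x = v
    · exact hx ▸ List.mem_cons_self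
    · exact List.mem_cons_of_mem v ((hmem1 x).2 hx)
  have hpL : L.Pairwise (fun a b => ¬ r b a) := by
    refine List.pairwise_cons.2 ⟨fun b _ => hv b, ?_⟩
    exact hp0.sublist (List.erase_sublist)
  have hvalid : ValidSeq Y r L := by
    refine validSeq_of L r hr hndL hpL ?_
    intro a _ j hj
    exact absurd (hmemL j) hj
  have hfold : L.foldl click r = r := by
    funext i j
    by_cases hij : i = j
    · subst hij; exact foldl_click_diag L r i
    · rw [foldl_click_apply L r i j hij]
      have hci : L.count i = 1 := List.count_eq_one_of_mem hndL (hmemL i)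
      have hcj : L.count j = 1 := List.count_eq_one_of_mem hndL (hmemL j)
      rw [hci, hcj]
      norm_num
  obtain ⟨hsrc, hvalid'⟩ := hvalid
  have := chain_of_validSeq L1 (click r v) (click_mem_acyc hr hv) hvalid'
  have hfold' : L1.foldl click (click r v) = r := by
    rw [← List.foldl_cons]; exact hfold
  rwa [hfold'] at this

end Aux

/-- clicking a source of an acyclic orientation yields again an
acyclic orientation, and the relation generated by clicks on Acyc(Y) is an
equivalence relation (reflexive, symmetric and transitive). -/
theorem click_acyclic_and_equivalence {V : Type*} [Fintype V] (Y : SimpleGraph V) :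
    (∀ r ∈ Acyc Y, ∀ v, IsSource r v → click r v ∈ Acyc Y) ∧
    Equivalence (fun a b : Acyc Y => Relation.ReflTransGen (ClickStep Y) a.1 b.1) := by
  constructor
  · exact fun r hr v hv => click_mem_acyc hr hv
  · refine ⟨fun a => Relation.ReflTransGen.refl, ?_, fun h1 h2 => h1.trans h2⟩
    intro a b h
    have key : ∀ {x y : V → V → Prop}, Relation.ReflTransGen (ClickStep Y) x y →
        Relation.ReflTransGen (ClickStep Y) y x := by
      intro x y hxy
      induction hxy with
      | refl => exact Relation.ReflTransGen.refl
      | tail _ h2 ih => exact (clickStep_rev h2).trans ih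
    exact key h

end AcycPaper
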